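/- arXiv:2312.00556 — 2 statements merged into one kernel-verified Lean document; each statement's English description precedes it below -/
import Mathlib

section
/- For real ω > 0, lim_{t → ∞} ∫_{−t}^{t} e^{i(p⁰ + ω) r} |r| dr = ∂_{p⁰} PV(2/(p⁰ + ω)) in the sense of tempered distributions in p⁰; in particular, when paired with a Schwartz function φ(p⁰), the pairing ∫_{−t}^{t} |r| (∫ φ(p⁰) e^{i(p⁰+ω)r} dp⁰) dr converges as t → ∞ to a finite limit. -/
open MeasureTheory Filter Complex Real
open scoped FourierTransform

noncomputable section Stmt9Aux

/-- sign function as a complex number -/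
def sC (r : ℝ) : ℂ := if r < 0 then (-1 : ℂ) else 1

lemma sC_meas : Measurable sC :=
  Measurable.ite (measurableSet_lt measurable_id measurable_const) measurable_const measurable_const

lemma norm_sC (r : ℝ) : ‖sC r‖ = 1 := by
  unfold sC; split <;> simp

lemma sC_mul_self (r : ℝ) : sC r * r = (|r| : ℝ) := by
  unfold sC
  rcases lt_or_ge r 0 with hr | hr
  · rw [if_pos hr, abs_of_neg hr]; push_cast; ring
  · rw [if_neg (not_lt.mpr hr), _root_.abs_of_nonneg hr]; push_cast; ring

lemma norm_exp_I_mul (x : ℝ) : ‖Complex.exp ((x : ℂ) * Complex.I)‖ = 1 := by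
  rw [Complex.norm_exp_ofReal_mul_I]

lemma exp_form (p ω r : ℝ) :
    Complex.exp (Complex.I * ((p : ℂ) + ω) * r) =
      Complex.exp ((((p + ω) * r : ℝ) : ℂ) * Complex.I) := by
  congr 1; push_cast; ring

/-- Fourier representation of the phase integral. -/
lemma auxA (f : ℝ → ℂ) (ω r : ℝ) :
    (∫ p : ℝ, f p * Complex.exp (Complex.I * ((p : ℂ) + ω) * r)) =
      Complex.exp (Complex.I * ω * r) * 𝓕 f (-r / (2 * π)) := by
  rw [Real.fourier_real_eq_integral_exp_smul, ← integral_const_mul]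
  congr 1; funext p
  rw [smul_eq_mul]
  have h : (-2 * π * p * (-r / (2 * π)) : ℝ) = p * r := by
    field_simp
  rw [h]
  have h2 : Complex.exp (Complex.I * ((p : ℂ) + ω) * r) =
      Complex.exp (Complex.I * ω * r) * Complex.exp (((p * r : ℝ) : ℂ) * Complex.I) := by
    rw [← Complex.exp_add]; congr 1; push_cast; ring
  rw [h2]; ring


/-- Fourier transform of the derivative, specialized. -/
lemma auxB (φ : SchwartzMap ℝ ℂ) (r : ℝ) :
    𝓕 (deriv (⇑φ)) (-r / (2 * π)) = (-Complex.I * r) * 𝓕 (⇑φ) (-r / (2 * π)) := by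
  have hd : (deriv (⇑φ)) = ⇑(SchwartzMap.derivCLM ℝ ℂ φ) := by
    funext x; rw [SchwartzMap.derivCLM_apply]
  have h := Real.fourier_deriv φ.integrable φ.differentiable
    (by rw [hd]; exact (SchwartzMap.derivCLM ℝ ℂ φ).integrable)
  rw [congrFun h (-r / (2 * π)), smul_eq_mul]
  congr 1
  have hπ : (π : ℂ) ≠ 0 := by
    simpa using Complex.ofReal_ne_zero.mpr Real.pi_ne_zero
  push_cast
  field_simp

/-- the key pointwise identity in `r`. -/
lemma auxC (φ : SchwartzMap ℝ ℂ) (ω r : ℝ) :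
    ((|r| : ℝ) : ℂ) * (∫ p : ℝ, φ p * Complex.exp (Complex.I * ((p : ℂ) + ω) * r)) =
      ∫ p : ℝ, (Complex.I * sC r) * (deriv (⇑φ) p * Complex.exp (Complex.I * ((p : ℂ) + ω) * r)) := by
  rw [auxA (⇑φ) ω r, integral_const_mul, auxA (deriv (⇑φ)) ω r, auxB φ r, ← sC_mul_self r]
  ring_nf
  rw [Complex.I_sq]
  ring

/-- the inner `r`-integral computation. -/
lemma auxD (q : ℝ) (hq : q ≠ 0) (T : ℝ) (hT : 0 ≤ T) (a : ℂ) :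
    (∫ r in Set.Ioc (-T) T,
        (Complex.I * sC r) * (a * Complex.exp (Complex.I * (q : ℂ) * r))) =
      a * (((2 * Real.cos (q * T) - 2 : ℝ) : ℂ) / (q : ℂ)) := by
  have hq' : (q : ℂ) ≠ 0 := Complex.ofReal_ne_zero.mpr hq
  have hc : Complex.I * (q : ℂ) ≠ 0 := mul_ne_zero Complex.I_ne_zero hq'
  have hsplit : Set.Ioc (-T) 0 ∪ Set.Ioc 0 T = Set.Ioc (-T) T :=
    Set.Ioc_union_Ioc_eq_Ioc (by linarith) hT
  -- continuous versions on each half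
  have hcont : ∀ b : ℂ, Continuous (fun r : ℝ => b * (a * Complex.exp (Complex.I * (q : ℂ) * r))) := by
    intro b; fun_prop
  have hmeas : ∀ u v : ℝ, MeasurableSet (Set.Ioc u v) := fun u v => measurableSet_Ioc
  have norm_exp' : ∀ r : ℝ, ‖Complex.exp (Complex.I * (q : ℂ) * r)‖ = 1 := by
    intro r
    have h : Complex.I * (q : ℂ) * r = ((q * r : ℝ) : ℂ) * Complex.I := by push_cast; ring
    rw [h, norm_exp_I_mul]
  have hae : ∀ (u v : ℝ) (b : ℂ),
      (∀ r ∈ Set.Ioo u v, sC r = b) →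
      (∫ r in Set.Ioc u v, (Complex.I * sC r) * (a * Complex.exp (Complex.I * (q : ℂ) * r)))
        = ∫ r in Set.Ioc u v, (Complex.I * b) * (a * Complex.exp (Complex.I * (q : ℂ) * r)) := by
    intro u v b hb
    rw [integral_Ioc_eq_integral_Ioo, integral_Ioc_eq_integral_Ioo]
    apply setIntegral_congr_fun measurableSet_Ioo
    intro r hr
    simp only [hb r hr]
  have hconte : Continuous (fun r : ℝ => a * Complex.exp (Complex.I * (q : ℂ) * r)) := by
    fun_prop
  have hint : ∀ u v : ℝ, IntegrableOn
      (fun r => (Complex.I * sC r) * (a * Complex.exp (Complex.I * (q : ℂ) * r)))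
      (Set.Ioc u v) volume := by
    intro u v
    refine Integrable.mono'
      (integrableOn_const measure_Ioc_lt_top.ne :
        IntegrableOn (fun _ : ℝ => ‖a‖) (Set.Ioc u v) volume)
      (((sC_meas.const_mul Complex.I).mul hconte.measurable).aestronglyMeasurable) ?_
    filter_upwards with r
    rw [norm_mul, norm_mul, norm_mul, norm_sC, norm_exp', Complex.norm_I]
    simp
  rw [← hsplit, setIntegral_union (Set.Ioc_disjoint_Ioc_of_le le_rfl) measurableSet_Ioc (hint _ _) (hint _ _),
      hae (-T) 0 (-1) (fun r hr => if_pos hr.2),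
      hae 0 T 1 (fun r hr => if_neg (not_lt.mpr hr.1.le)),
      ← intervalIntegral.integral_of_le (by linarith : (-T : ℝ) ≤ 0),
      ← intervalIntegral.integral_of_le hT]
  have hrw : ∀ (b : ℂ) (r : ℝ), (Complex.I * b) * (a * Complex.exp (Complex.I * (q : ℂ) * r))
      = (Complex.I * b * a) * Complex.exp ((Complex.I * (q : ℂ)) * r) := by
    intro b r; ring
  simp_rw [hrw]
  rw [intervalIntegral.integral_const_mul, intervalIntegral.integral_const_mul,
      integral_exp_mul_complex hc, integral_exp_mul_complex hc]
  have eT : (Complex.I * (q : ℂ)) * ((T : ℝ) : ℂ) = ((q * T : ℝ) : ℂ) * Complex.I := by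
    push_cast; ring
  have eT' : (Complex.I * (q : ℂ)) * ((-T : ℝ) : ℂ) = -(((q * T : ℝ) : ℂ)) * Complex.I := by
    push_cast; ring
  have e0 : (Complex.I * (q : ℂ)) * ((0 : ℝ) : ℂ) = 0 := by push_cast; ring
  rw [eT, eT', e0, Complex.exp_zero]
  have hcos : ((2 * Real.cos (q * T) - 2 : ℝ) : ℂ)
      = Complex.exp (((q * T : ℝ) : ℂ) * Complex.I)
        + Complex.exp (-(((q * T : ℝ) : ℂ)) * Complex.I) - 2 := by
    have hc2 : Complex.cos ((q * T : ℝ) : ℂ)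
        = (Complex.exp (((q * T : ℝ) : ℂ) * Complex.I)
            + Complex.exp (-(((q * T : ℝ) : ℂ)) * Complex.I)) / 2 := rfl
    have hc3 : ((2 * Real.cos (q * T) - 2 : ℝ) : ℂ) = 2 * Complex.cos ((q * T : ℝ) : ℂ) - 2 := by
      rw [Complex.ofReal_sub, Complex.ofReal_mul, Complex.ofReal_cos]
      norm_num
    rw [hc3, hc2]
    ring
  rw [hcos]
  field_simp
  ring


lemma norm_term (ω r p : ℝ) (b : ℂ) :
    ‖(Complex.I * sC r) * (b * Complex.exp (Complex.I * ((p : ℂ) + ω) * r))‖ = ‖b‖ := by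
  rw [norm_mul, norm_mul, norm_mul, norm_sC, exp_form, norm_exp_I_mul,
    Complex.norm_I]
  ring

/-- Fubini swap. -/
lemma auxE (T ω : ℝ) (g : ℝ → ℂ) (hgi : Integrable g volume) (hgc : Continuous g) :
    (∫ r in Set.Ioc (-T) T,
        ∫ p : ℝ, (Complex.I * sC r) * (g p * Complex.exp (Complex.I * ((p : ℂ) + ω) * r)))
      = ∫ p : ℝ, ∫ r in Set.Ioc (-T) T,
          (Complex.I * sC r) * (g p * Complex.exp (Complex.I * ((p : ℂ) + ω) * r)) := by
  apply integral_integral_swap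
  have hmF : AEStronglyMeasurable
      (fun z : ℝ × ℝ => (Complex.I * sC z.1) * (g z.2 * Complex.exp (Complex.I * ((z.2 : ℂ) + ω) * z.1)))
      ((volume.restrict (Set.Ioc (-T) T)).prod volume) := by
    apply Measurable.aestronglyMeasurable
    apply Measurable.mul
    · exact ((sC_meas.comp measurable_fst).const_mul Complex.I)
    · apply Continuous.measurable
      have : Continuous fun z : ℝ × ℝ => Complex.exp (Complex.I * ((z.2 : ℂ) + ω) * z.1) := by
        fun_prop
      exact (hgc.comp continuous_snd).mul this
  rw [Function.uncurry_def]
  refine (integrable_prod_iff hmF).mpr ⟨?_, ?_⟩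
  · filter_upwards with r
    refine Integrable.mono' hgi.norm ?_ ?_
    · apply Measurable.aestronglyMeasurable
      apply Measurable.mul measurable_const
      apply Continuous.measurable
      fun_prop
    · filter_upwards with p
      rw [norm_term]
  · apply Integrable.congr (integrable_const (∫ p : ℝ, ‖g p‖))
    filter_upwards with r
    congr 1
    funext p
    rw [norm_term]

/-- odd functions integrate to zero on `[-1,1]`. -/
lemma auxO (f : ℝ → ℂ) (hodd : ∀ x, f (-x) = -f x)
    (hint : IntegrableOn f (Set.Icc (-1 : ℝ) 1) volume) :
    ∫ q in Set.Icc (-1 : ℝ) 1, f q = 0 := by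
  have h1 : ∫ q in Set.Icc (-1 : ℝ) 1, f q = ∫ q in (-1 : ℝ)..1, f q := by
    rw [intervalIntegral.integral_of_le (by norm_num : (-1 : ℝ) ≤ 1)]
    exact (setIntegral_congr_set Ioc_ae_eq_Icc).symm
  have hi1 : IntervalIntegrable f volume (-1) 0 := by
    apply IntegrableOn.intervalIntegrable
    apply hint.mono_set
    rw [Set.uIcc_of_le (by norm_num : (-1 : ℝ) ≤ 0)]
    exact Set.Icc_subset_Icc le_rfl (by norm_num)
  have hi2 : IntervalIntegrable f volume 0 1 := by
    apply IntegrableOn.intervalIntegrable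
    apply hint.mono_set
    rw [Set.uIcc_of_le (by norm_num : (0 : ℝ) ≤ 1)]
    exact Set.Icc_subset_Icc (by norm_num) le_rfl
  rw [h1, ← intervalIntegral.integral_add_adjacent_intervals hi1 hi2]
  have h2 : ∫ x in (-1 : ℝ)..0, f x = ∫ x in (0 : ℝ)..1, f (-x) := by
    rw [intervalIntegral.integral_comp_neg fun x => f x]
    norm_num
  rw [h2]
  simp_rw [hodd]
  rw [intervalIntegral.integral_neg]
  ring

/-- the principal-value cancellation of `1/q` on the annulus. -/
lemma auxL (δ : ℝ) (h0 : 0 < δ) (h1 : δ < 1) :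
    ∫ q in ({q : ℝ | δ < |q|} ∩ Set.Icc (-1 : ℝ) 1), ((q⁻¹ : ℝ) : ℂ) = 0 := by
  have hset : {q : ℝ | δ < |q|} ∩ Set.Icc (-1 : ℝ) 1
      = Set.Ico (-1 : ℝ) (-δ) ∪ Set.Ioc δ 1 := by
    ext q
    simp only [Set.mem_inter_iff, Set.mem_setOf_eq, Set.mem_Icc, Set.mem_union, Set.mem_Ico,
      Set.mem_Ioc, lt_abs, lt_neg]
    constructor
    · rintro ⟨h | h, h2, h3⟩
      · exact Or.inr ⟨h, h3⟩
      · exact Or.inl ⟨h2, by linarith⟩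
    · rintro (⟨h2, h3⟩ | ⟨h2, h3⟩)
      · exact ⟨Or.inr (by linarith), h2, by linarith⟩
      · exact ⟨Or.inl h2, by linarith, h3⟩
  have hicc : ∀ u v : ℝ, (0 : ℝ) ∉ Set.Icc u v →
      IntegrableOn (fun q : ℝ => ((q⁻¹ : ℝ) : ℂ)) (Set.Icc u v) volume := by
    intro u v h0'
    apply ContinuousOn.integrableOn_compact isCompact_Icc
    apply Continuous.comp_continuousOn Complex.continuous_ofReal
    exact ContinuousOn.inv₀ continuousOn_id fun x hx hx0 => h0' (hx0 ▸ hx)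
  have hIco : IntegrableOn (fun q : ℝ => ((q⁻¹ : ℝ) : ℂ)) (Set.Ico (-1 : ℝ) (-δ)) volume :=
    (hicc (-1) (-δ) (by intro h; simp only [Set.mem_Icc] at h; linarith [h.2])).mono_set
      Set.Ico_subset_Icc_self
  have hIoc : IntegrableOn (fun q : ℝ => ((q⁻¹ : ℝ) : ℂ)) (Set.Ioc δ 1) volume :=
    (hicc δ 1 (by intro h; simp only [Set.mem_Icc] at h; linarith [h.1])).mono_set
      Set.Ioc_subset_Icc_self
  have hdisj : Disjoint (Set.Ico (-1 : ℝ) (-δ)) (Set.Ioc δ 1) := by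
    rw [Set.disjoint_left]
    rintro x ⟨-, hx2⟩ ⟨hx3, -⟩
    linarith
  have hn1 : (0 : ℝ) ∉ Set.uIcc (-1 : ℝ) (-δ) := by
    rw [Set.uIcc_of_le (by linarith : (-1 : ℝ) ≤ -δ)]
    intro h; simp only [Set.mem_Icc] at h; linarith [h.2]
  have hn2 : (0 : ℝ) ∉ Set.uIcc δ 1 := by
    rw [Set.uIcc_of_le (by linarith : δ ≤ 1)]
    intro h; simp only [Set.mem_Icc] at h; linarith [h.1]
  rw [hset, setIntegral_union hdisj measurableSet_Ioc hIco hIoc,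
    setIntegral_congr_set Ico_ae_eq_Ioc,
    ← intervalIntegral.integral_of_le (by linarith : (-1 : ℝ) ≤ -δ),
    ← intervalIntegral.integral_of_le (by linarith : δ ≤ 1),
    intervalIntegral.integral_ofReal, intervalIntegral.integral_ofReal,
    integral_inv hn1, integral_inv hn2]
  have e1 : (-δ) / (-1 : ℝ) = δ := by norm_num
  have e2 : (1 : ℝ) / δ = δ⁻¹ := one_div δ
  rw [e1, e2, Real.log_inv]
  push_cast
  ring


lemma kk_bound (t q : ℝ) (hq : |q| ≤ 1) :
    ‖((2 * Real.cos (q * t) - 2 : ℝ) : ℂ) * ((q⁻¹ : ℝ) : ℂ)‖ ≤ t ^ 2 := by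
  by_cases h0 : q = 0
  · subst h0; simp; positivity
  · rw [norm_mul, Complex.norm_real, Complex.norm_real, Real.norm_eq_abs, Real.norm_eq_abs]
    have hcos1 : 2 * Real.cos (q * t) - 2 ≤ 0 := by
      have := Real.cos_le_one (q * t); linarith
    have hcos2 : |2 * Real.cos (q * t) - 2| ≤ (q * t) ^ 2 := by
      rw [abs_of_nonpos hcos1]
      have := Real.one_sub_sq_div_two_le_cos (x := q * t)
      nlinarith
    have habs : |q⁻¹| = |q|⁻¹ := abs_inv q
    have hq0 : 0 < |q| := abs_pos.mpr h0
    calc |2 * Real.cos (q * t) - 2| * |q⁻¹| ≤ (q * t) ^ 2 * |q|⁻¹ := by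
          rw [habs]; exact mul_le_mul_of_nonneg_right hcos2 (by positivity)
      _ = |q| * t ^ 2 := by
          have e : (q * t) ^ 2 = |q| ^ 2 * t ^ 2 := by rw [mul_pow, _root_.sq_abs]
          rw [e]
          field_simp
      _ ≤ 1 * t ^ 2 := mul_le_mul_of_nonneg_right hq (by positivity)
      _ = t ^ 2 := one_mul _

lemma cos_as_exp (x : ℝ) : ((Real.cos x : ℝ) : ℂ)
    = (Complex.exp ((x : ℂ) * Complex.I) + Complex.exp (-(x : ℂ) * Complex.I)) / 2 := by
  rw [Complex.ofReal_cos]; rfl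

end Stmt9Aux

theorem stmt_9 (ω : ℝ) (hω : 0 < ω) (φ : SchwartzMap ℝ ℂ) :
    ∃ L : ℂ,
      Tendsto
        (fun δ : ℝ =>
          -∫ p in {p : ℝ | δ < |p + ω|},
            (2 : ℂ) * deriv (fun q : ℝ => φ q) p / ((p : ℂ) + ω))
        (nhdsWithin 0 (Set.Ioi 0)) (nhds L) ∧
      Tendsto
        (fun t : ℝ =>
          ∫ r in Set.Ioc (-t) t,
            ((|r| : ℝ) : ℂ) * ∫ p : ℝ, φ p * Complex.exp (Complex.I * ((p : ℂ) + ω) * r))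
        atTop (nhds L) := by
  classical
  have hd : deriv (⇑φ) = ⇑(SchwartzMap.derivCLM ℝ ℂ φ) := by
    funext x; rw [SchwartzMap.derivCLM_apply]
  have hφ'int : Integrable (deriv (⇑φ)) volume := by
    rw [hd]; exact (SchwartzMap.derivCLM ℝ ℂ φ).integrable
  have hφ'cont : Continuous (deriv (⇑φ)) := by
    rw [hd]; exact (SchwartzMap.derivCLM ℝ ℂ φ).continuous
  obtain ⟨K, hK⟩ : ∃ K : NNReal, LipschitzWith K (deriv (⇑φ)) := by
    set φ1 := SchwartzMap.derivCLM ℝ ℂ φ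
    set φ2 := SchwartzMap.derivCLM ℝ ℂ φ1
    obtain ⟨C, -, hC⟩ := φ2.decay 0 0
    refine ⟨C.toNNReal, ?_⟩
    rw [hd]
    apply lipschitzWith_of_nnnorm_deriv_le φ1.differentiable
    intro x
    have h1 := hC x
    simp [norm_iteratedFDeriv_zero] at h1
    have h2 : deriv (⇑φ1) x = φ2 x := (SchwartzMap.derivCLM_apply ℝ φ1 x).symm
    rw [← NNReal.coe_le_coe, h2]
    calc (‖φ2 x‖₊ : ℝ) = ‖φ2 x‖ := rfl
      _ ≤ C := h1
      _ ≤ C.toNNReal := Real.le_coe_toNNReal C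
  set c : ℂ := deriv (⇑φ) (-ω) with hc
  set ψ : ℝ → ℂ := fun q => deriv (⇑φ) (q - ω) with hψdef
  have hψcont : Continuous ψ := hφ'cont.comp (continuous_sub_right ω)
  have hψint : Integrable ψ volume := by
    have : ψ = (fun q => deriv (⇑φ) (q + -ω)) := by funext q; simp [hψdef, sub_eq_add_neg]
    rw [this]
    exact hφ'int.comp_add_right (-ω)
  set u : ℝ → ℂ := fun q => ψ q - Set.indicator (Set.Icc (-1 : ℝ) 1) (fun _ => c) q with hudef
  set h : ℝ → ℂ := fun q => u q * ((q⁻¹ : ℝ) : ℂ) with hhdef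
  have humeas : Measurable u :=
    hψcont.measurable.sub (measurable_const.indicator measurableSet_Icc)
  have hhmeas : Measurable h :=
    humeas.mul (Complex.measurable_ofReal.comp measurable_inv)
  -- bound for h near zero
  have hKb : ∀ q : ℝ, |q| ≤ 1 → ‖h q‖ ≤ K := by
    intro q hq
    by_cases hq0 : q = 0
    · subst hq0; simp [hhdef]
    have hmem : q ∈ Set.Icc (-1 : ℝ) 1 := by
      rcases abs_le.mp hq with ⟨h1, h2⟩; exact ⟨h1, h2⟩
    have huq : u q = deriv (⇑φ) (q - ω) - deriv (⇑φ) (-ω) := by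
      simp [hudef, hψdef, Set.indicator_of_mem hmem, hc]
    have h1 : ‖u q‖ ≤ K * |q| := by
      rw [huq]
      have := hK.dist_le_mul (q - ω) (-ω)
      rw [dist_eq_norm, dist_eq_norm] at this
      calc ‖deriv (⇑φ) (q - ω) - deriv (⇑φ) (-ω)‖ ≤ K * ‖(q - ω) - (-ω)‖ := this
        _ = K * |q| := by rw [show (q - ω) - (-ω) = q by ring, Real.norm_eq_abs]
    have : ‖h q‖ = ‖u q‖ * |q|⁻¹ := by
      rw [hhdef]
      simp only []
      rw [norm_mul, Complex.norm_real, Real.norm_eq_abs, abs_inv]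
    rw [this]
    have hq0' : (0 : ℝ) < |q| := abs_pos.mpr hq0
    calc ‖u q‖ * |q|⁻¹ ≤ (K * |q|) * |q|⁻¹ :=
          mul_le_mul_of_nonneg_right h1 (by positivity)
      _ = K := by field_simp
  -- integrability of h
  have hhint : Integrable h volume := by
    apply Integrable.mono'
      (g := fun q => ‖ψ q‖ + Set.indicator (Set.Icc (-1 : ℝ) 1) (fun _ => (K : ℝ)) q)
      (hψint.norm.add ((integrable_indicator_iff measurableSet_Icc).mpr
        (integrableOn_const measure_Icc_lt_top.ne)))
      hhmeas.aestronglyMeasurable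
    filter_upwards with q
    by_cases hq : |q| ≤ 1
    · have hmem : q ∈ Set.Icc (-1 : ℝ) 1 := by
        rcases abs_le.mp hq with ⟨h1, h2⟩; exact ⟨h1, h2⟩
      rw [Set.indicator_of_mem hmem]
      have := hKb q hq
      have := norm_nonneg (ψ q)
      linarith [hKb q hq]
    · have hmem : q ∉ Set.Icc (-1 : ℝ) 1 := by
        intro hmem; exact hq (abs_le.mpr ⟨hmem.1, hmem.2⟩)
      rw [Set.indicator_of_notMem hmem]
      have huq : u q = ψ q := by simp [hudef, Set.indicator_of_notMem hmem]
      have h1 : |q|⁻¹ ≤ 1 := by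
        rw [inv_le_one_iff₀]; right; linarith [not_le.mp hq]
      have : ‖h q‖ = ‖ψ q‖ * |q|⁻¹ := by
        rw [hhdef]; simp only []
        rw [norm_mul, Complex.norm_real, Real.norm_eq_abs, abs_inv, huq]
      rw [this]
      have := norm_nonneg (ψ q)
      nlinarith [norm_nonneg (ψ q)]
  set Lh : ℂ := ∫ q, h q with hLhdef
  refine ⟨(-2 : ℂ) * Lh, ?_, ?_⟩
  · -- PV side
    have hmeasS : ∀ δ : ℝ, MeasurableSet {q : ℝ | δ < |q|} :=
      fun δ => measurableSet_lt measurable_const measurable_id.abs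
    have hmain : ∀ δ : ℝ, 0 < δ → δ < 1 →
        (-∫ p in {p : ℝ | δ < |p + ω|},
            (2 : ℂ) * deriv (fun q : ℝ => φ q) p / ((p : ℂ) + ω))
          = -2 * (Lh - ∫ q in Set.Icc (-δ) δ, h q) := by
      intro δ hδ0 hδ1
      have hpre : {p : ℝ | δ < |p + ω|} = (fun p => p + ω) ⁻¹' {q : ℝ | δ < |q|} := rfl
      have htr : (∫ p in {p : ℝ | δ < |p + ω|},
            (2 : ℂ) * deriv (fun q : ℝ => φ q) p / ((p : ℂ) + ω))
          = ∫ q in {q : ℝ | δ < |q|}, (2 : ℂ) * ψ q * ((q⁻¹ : ℝ) : ℂ) := by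
        rw [hpre, ← (measurePreserving_add_right volume ω).setIntegral_preimage_emb
          (MeasurableEquiv.measurableEmbedding (MeasurableEquiv.addRight ω))
          (fun q => (2 : ℂ) * ψ q * ((q⁻¹ : ℝ) : ℂ)) _]
        apply setIntegral_congr_fun ((hmeasS δ).preimage (measurable_add_const ω))
        intro p hp
        have hψp : ψ (p + ω) = deriv (⇑φ) p := by simp [hψdef]
        show (2 : ℂ) * deriv (⇑φ) p / ((p : ℂ) + ω) = 2 * ψ (p + ω) * (((p + ω)⁻¹ : ℝ) : ℂ)
        rw [hψp, Complex.ofReal_inv, Complex.ofReal_add, div_eq_mul_inv]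
      have hindint : Integrable
          (Set.indicator (Set.Icc (-1 : ℝ) 1) (fun _ : ℝ => ‖(2 : ℂ) * c‖ * δ⁻¹)) volume := by
        rw [integrable_indicator_iff measurableSet_Icc]
        exact integrableOn_const measure_Icc_lt_top.ne
      have hint2 : IntegrableOn
          (Set.indicator (Set.Icc (-1 : ℝ) 1) (fun x => 2 * c * ((x⁻¹ : ℝ) : ℂ)))
          {q : ℝ | δ < |q|} volume := by
        apply Integrable.mono' hindint.integrableOn
        · exact (measurable_const.indicator measurableSet_Icc :
            Measurable (Set.indicator (Set.Icc (-1 : ℝ) 1) (fun _ => (2 : ℂ) * c))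
            ).mul (Complex.measurable_ofReal.comp measurable_inv)
            |>.aestronglyMeasurable.restrict.congr (by
              filter_upwards with q
              by_cases hmem : q ∈ Set.Icc (-1 : ℝ) 1
              · simp [Set.indicator_of_mem hmem]
              · simp [Set.indicator_of_notMem hmem])
        · rw [ae_restrict_iff' (hmeasS δ)]
          filter_upwards with q hq
          by_cases hmem : q ∈ Set.Icc (-1 : ℝ) 1
          · rw [Set.indicator_of_mem hmem, Set.indicator_of_mem hmem,
              norm_mul, Complex.norm_real, Real.norm_eq_abs, abs_inv]
            have hq' : δ < |q| := hq
            have : |q|⁻¹ ≤ δ⁻¹ := by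
              apply inv_anti₀ hδ0 hq'.le
            have h2c := norm_nonneg ((2 : ℂ) * c)
            nlinarith [abs_nonneg q]
          · rw [Set.indicator_of_notMem hmem, Set.indicator_of_notMem hmem, norm_zero]
      have hsplitInt : (∫ q in {q : ℝ | δ < |q|}, (2 : ℂ) * ψ q * ((q⁻¹ : ℝ) : ℂ))
          = 2 * ∫ q in {q : ℝ | δ < |q|}, h q := by
        have heq : ∀ q ∈ {q : ℝ | δ < |q|}, (2 : ℂ) * ψ q * ((q⁻¹ : ℝ) : ℂ)
            = 2 * h q + Set.indicator (Set.Icc (-1 : ℝ) 1)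
                (fun x => 2 * c * ((x⁻¹ : ℝ) : ℂ)) q := by
          intro q hq
          have hind : Set.indicator (Set.Icc (-1 : ℝ) 1) (fun x => 2 * c * ((x⁻¹ : ℝ) : ℂ)) q
              = 2 * Set.indicator (Set.Icc (-1 : ℝ) 1) (fun _ => c) q * ((q⁻¹ : ℝ) : ℂ) := by
            by_cases hmem : q ∈ Set.Icc (-1 : ℝ) 1
            · rw [Set.indicator_of_mem hmem, Set.indicator_of_mem hmem]
            · rw [Set.indicator_of_notMem hmem, Set.indicator_of_notMem hmem]; ring
          rw [hind, hhdef]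
          simp only [hudef]
          ring
        rw [setIntegral_congr_fun (hmeasS δ) heq,
          integral_add ((hhint.const_mul 2).integrableOn) hint2,
          setIntegral_indicator measurableSet_Icc]
        have hzero : (∫ q in {q : ℝ | δ < |q|} ∩ Set.Icc (-1 : ℝ) 1,
            2 * c * ((q⁻¹ : ℝ) : ℂ)) = 0 := by
          rw [integral_const_mul, auxL δ hδ0 hδ1, mul_zero]
        rw [hzero, integral_const_mul, add_zero]
      have hceq : {q : ℝ | δ < |q|}ᶜ = Set.Icc (-δ) δ := by
        ext q
        simp [Set.mem_compl_iff, not_lt, abs_le]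
      have hcompl : (∫ q in {q : ℝ | δ < |q|}, h q)
          = Lh - ∫ q in Set.Icc (-δ) δ, h q := by
        have := integral_add_compl (hmeasS δ) hhint
        rw [hceq] at this
        rw [hLhdef, ← this]
        ring
      rw [htr, hsplitInt, hcompl]
      ring
    have hsm : Tendsto (fun δ : ℝ => ∫ q in Set.Icc (-δ) δ, h q)
        (nhdsWithin 0 (Set.Ioi 0)) (nhds 0) := by
      apply squeeze_zero_norm' (a := fun δ : ℝ => (K : ℝ) * (2 * δ))
      · filter_upwards [Ioo_mem_nhdsGT_of_mem (Set.mem_Ico.mpr ⟨le_refl (0:ℝ), one_pos⟩)]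
          with δ hδ
        have hvol : volume (Set.Icc (-δ) δ) < ⊤ := measure_Icc_lt_top
        have hb : ∀ x ∈ Set.Icc (-δ) δ, ‖h x‖ ≤ (K : ℝ) := by
          intro x hx
          apply hKb
          rw [abs_le]
          constructor
          · linarith [hx.1, hδ.2]
          · linarith [hx.2, hδ.2]
        calc ‖∫ q in Set.Icc (-δ) δ, h q‖
            ≤ (K : ℝ) * (volume (Set.Icc (-δ) δ)).toReal :=
              norm_setIntegral_le_of_norm_le_const hvol hb
          _ = (K : ℝ) * (2 * δ) := by
              rw [Real.volume_Icc, ENNReal.toReal_ofReal (by linarith [hδ.1] : (0:ℝ) ≤ δ - -δ)]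
              ring_nf
      · have : Tendsto (fun δ : ℝ => (K : ℝ) * (2 * δ)) (nhds 0) (nhds ((K : ℝ) * (2 * 0))) :=
          (tendsto_id.const_mul 2).const_mul (K : ℝ)
        simpa using this.mono_left nhdsWithin_le_nhds
    have hlim : Tendsto (fun δ : ℝ => -2 * (Lh - ∫ q in Set.Icc (-δ) δ, h q))
        (nhdsWithin 0 (Set.Ioi 0)) (nhds (-2 * (Lh - 0))) :=
      (tendsto_const_nhds.sub hsm).const_mul (-2 : ℂ)
    rw [show -2 * (Lh - 0) = (-2 : ℂ) * Lh by ring] at hlim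
    apply hlim.congr'
    filter_upwards [Ioo_mem_nhdsGT_of_mem (Set.mem_Ico.mpr ⟨le_refl (0:ℝ), one_pos⟩)]
      with δ hδ
    exact (hmain δ hδ.1 hδ.2).symm
  · -- time side
    have hintcos : ∀ t : ℝ, Integrable (fun q => h q * ((Real.cos (q * t) : ℝ) : ℂ)) volume := by
      intro t
      have hcosmeas : Measurable fun q : ℝ => ((Real.cos (q * t) : ℝ) : ℂ) := by
        apply Continuous.measurable; fun_prop
      apply Integrable.mono' hhint.norm (hhmeas.mul hcosmeas).aestronglyMeasurable
      filter_upwards with q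
      show ‖h q * _‖ ≤ ‖h q‖
      rw [norm_mul, Complex.norm_real, Real.norm_eq_abs]
      have h1 := Real.abs_cos_le_one (q * t)
      nlinarith [norm_nonneg (h q)]
    have hRL : Tendsto (fun t : ℝ => ∫ q : ℝ, h q * ((Real.cos (q * t) : ℝ) : ℂ))
        atTop (nhds 0) := by
      have hexpint : ∀ w : ℝ, Integrable
          (fun v : ℝ => Complex.exp (((-2 * π * v * w : ℝ) : ℂ) * Complex.I) * h v) volume := by
        intro w
        have hcont : Continuous fun v : ℝ =>
            Complex.exp (((-2 * π * v * w : ℝ) : ℂ) * Complex.I) := by fun_prop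
        apply Integrable.mono' hhint.norm (hcont.measurable.mul hhmeas).aestronglyMeasurable
        filter_upwards with q
        show ‖_ * h q‖ ≤ ‖h q‖
        rw [norm_mul, norm_exp_I_mul, one_mul]
      have e : ∀ w : ℝ, 𝓕 h w
          = ∫ v : ℝ, Complex.exp (((-2 * π * v * w : ℝ) : ℂ) * Complex.I) * h v := by
        intro w
        rw [Real.fourier_real_eq_integral_exp_smul]
        simp_rw [smul_eq_mul]
      have hsplitcos : ∀ t : ℝ, (∫ q : ℝ, h q * ((Real.cos (q * t) : ℝ) : ℂ))
          = (𝓕 h (t / (2 * π)) + 𝓕 h (-t / (2 * π))) / 2 := by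
        intro t
        rw [e, e, ← integral_add (hexpint _) (hexpint _), ← integral_div]
        apply integral_congr_ae (Filter.Eventually.of_forall ?_)
        intro q
        have e1 : (-2 * π * q * (t / (2 * π)) : ℝ) = -(q * t) := by field_simp
        have e2 : (-2 * π * q * (-t / (2 * π)) : ℝ) = q * t := by field_simp
        rw [e1, e2, cos_as_exp]
        push_cast
        ring
      have h2π : (0 : ℝ) < 2 * π := by positivity
      have hdiv : Tendsto (fun t : ℝ => t / (2 * π)) atTop atTop :=
        tendsto_id.atTop_div_const h2π
      have hdivneg : Tendsto (fun t : ℝ => -t / (2 * π)) atTop atBot := by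
        simp_rw [neg_div]
        exact tendsto_neg_atTop_atBot.comp hdiv
      have hF := Real.zero_at_infty_fourier h
      have h1 : Tendsto (fun t : ℝ => 𝓕 h (t / (2 * π))) atTop (nhds 0) :=
        hF.comp (hdiv.mono_right (by rw [cocompact_eq_atBot_atTop]; exact le_sup_right))
      have h2 : Tendsto (fun t : ℝ => 𝓕 h (-t / (2 * π))) atTop (nhds 0) :=
        hF.comp (hdivneg.mono_right (by rw [cocompact_eq_atBot_atTop]; exact le_sup_left))
      have hcomb := (h1.add h2).div_const (2 : ℂ)
      rw [show ((0 : ℂ) + 0) / 2 = 0 by ring] at hcomb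
      exact hcomb.congr fun t => (hsplitcos t).symm
    have hkey : ∀ t : ℝ, 0 ≤ t →
        (∫ r in Set.Ioc (-t) t,
            ((|r| : ℝ) : ℂ) * ∫ p : ℝ, φ p * Complex.exp (Complex.I * ((p : ℂ) + ω) * r))
          = 2 * (∫ q : ℝ, h q * ((Real.cos (q * t) : ℝ) : ℂ)) - 2 * Lh := by
      intro t ht
      rw [setIntegral_congr_fun measurableSet_Ioc (fun r _ => auxC φ ω r),
        auxE t ω (deriv (⇑φ)) hφ'int hφ'cont]
      have hae : ∀ᵐ p : ℝ, p ≠ -ω := by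
        have h0 : volume ({-ω} : Set ℝ) = 0 := measure_singleton _
        rw [ae_iff]
        convert h0 using 2
        ext p
        simp
      have hstep3 : (∫ p : ℝ, ∫ r in Set.Ioc (-t) t,
            (Complex.I * sC r) * (deriv (⇑φ) p * Complex.exp (Complex.I * ((p : ℂ) + ω) * r)))
          = ∫ p : ℝ, deriv (⇑φ) p
              * (((2 * Real.cos ((p + ω) * t) - 2 : ℝ) : ℂ) * ((((p + ω)⁻¹ : ℝ)) : ℂ)) := by
        apply integral_congr_ae
        filter_upwards [hae] with p hp
        have hq : p + ω ≠ 0 := fun hq0 => hp (by linarith)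
        have hexp : ∀ r : ℝ, Complex.I * ((p : ℂ) + ω) * r
            = Complex.I * (((p + ω : ℝ)) : ℂ) * r := by
          intro r; push_cast; ring
        calc (∫ r in Set.Ioc (-t) t,
              (Complex.I * sC r) * (deriv (⇑φ) p * Complex.exp (Complex.I * ((p : ℂ) + ω) * r)))
            = ∫ r in Set.Ioc (-t) t, (Complex.I * sC r)
                * (deriv (⇑φ) p * Complex.exp (Complex.I * (((p + ω : ℝ)) : ℂ) * r)) := by
              apply setIntegral_congr_fun measurableSet_Ioc
              intro r _
              simp only [hexp r]
          _ = deriv (⇑φ) p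
              * (((2 * Real.cos ((p + ω) * t) - 2 : ℝ) : ℂ) / (((p + ω : ℝ)) : ℂ)) :=
              auxD (p + ω) hq t ht _
          _ = deriv (⇑φ) p
              * (((2 * Real.cos ((p + ω) * t) - 2 : ℝ) : ℂ) * ((((p + ω)⁻¹ : ℝ)) : ℂ)) := by
              rw [div_eq_mul_inv, Complex.ofReal_inv]
      rw [hstep3]
      have htrans : (∫ p : ℝ, deriv (⇑φ) p
            * (((2 * Real.cos ((p + ω) * t) - 2 : ℝ) : ℂ) * ((((p + ω)⁻¹ : ℝ)) : ℂ)))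
          = ∫ q : ℝ, ψ q * (((2 * Real.cos (q * t) - 2 : ℝ) : ℂ) * (((q⁻¹ : ℝ)) : ℂ)) := by
        rw [← integral_add_right_eq_self
          (fun q : ℝ => ψ q * (((2 * Real.cos (q * t) - 2 : ℝ) : ℂ) * (((q⁻¹ : ℝ)) : ℂ))) ω]
        congr 1
        funext p
        simp [hψdef]
      rw [htrans]
      have hsplit : (fun q : ℝ => ψ q * (((2 * Real.cos (q * t) - 2 : ℝ) : ℂ) * (((q⁻¹ : ℝ)) : ℂ)))
          = fun q : ℝ => h q * ((2 * Real.cos (q * t) - 2 : ℝ) : ℂ)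
            + Set.indicator (Set.Icc (-1 : ℝ) 1)
                (fun x => c * (((2 * Real.cos (x * t) - 2 : ℝ) : ℂ) * (((x⁻¹ : ℝ)) : ℂ))) q := by
        funext q
        by_cases hmem : q ∈ Set.Icc (-1 : ℝ) 1
        · rw [Set.indicator_of_mem hmem]
          simp only [hhdef, hudef, Set.indicator_of_mem hmem]
          ring
        · rw [Set.indicator_of_notMem hmem]
          simp only [hhdef, hudef, Set.indicator_of_notMem hmem]
          ring
      have hint1 : Integrable (fun q => h q * ((2 * Real.cos (q * t) - 2 : ℝ) : ℂ)) volume := by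
        have hcosmeas : Measurable fun q : ℝ => ((2 * Real.cos (q * t) - 2 : ℝ) : ℂ) := by
          apply Continuous.measurable; fun_prop
        apply Integrable.mono' (hhint.norm.const_mul 4)
          (hhmeas.mul hcosmeas).aestronglyMeasurable
        filter_upwards with q
        show ‖h q * _‖ ≤ 4 * ‖h q‖
        rw [norm_mul, Complex.norm_real, Real.norm_eq_abs]
        have h1 := Real.cos_le_one (q * t)
        have h2 := Real.neg_one_le_cos (q * t)
        have h3 : |2 * Real.cos (q * t) - 2| ≤ 4 := by
          rw [abs_le]; constructor <;> linarith
        nlinarith [norm_nonneg (h q)]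
      have hint2 : Integrable (Set.indicator (Set.Icc (-1 : ℝ) 1)
          (fun x => c * (((2 * Real.cos (x * t) - 2 : ℝ) : ℂ) * (((x⁻¹ : ℝ)) : ℂ)))) volume := by
        rw [integrable_indicator_iff measurableSet_Icc]
        have hmeasf : Measurable fun x : ℝ =>
            c * (((2 * Real.cos (x * t) - 2 : ℝ) : ℂ) * (((x⁻¹ : ℝ)) : ℂ)) := by
          apply Measurable.const_mul
          apply Measurable.mul
          · apply Continuous.measurable; fun_prop
          · exact Complex.measurable_ofReal.comp measurable_inv
        apply Integrable.mono' (g := fun _ : ℝ => ‖c‖ * t ^ 2)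
          (integrableOn_const measure_Icc_lt_top.ne)
          hmeasf.aestronglyMeasurable.restrict
        rw [ae_restrict_iff' measurableSet_Icc]
        filter_upwards with q hq
        rw [norm_mul]
        exact mul_le_mul_of_nonneg_left (kk_bound t q (abs_le.mpr ⟨hq.1, hq.2⟩)) (norm_nonneg c)
      rw [hsplit, integral_add hint1 hint2, integral_indicator measurableSet_Icc]
      have hodd0 : (∫ q in Set.Icc (-1 : ℝ) 1,
          c * (((2 * Real.cos (q * t) - 2 : ℝ) : ℂ) * (((q⁻¹ : ℝ)) : ℂ))) = 0 := by
        apply auxO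
        · intro x
          rw [show (-x) * t = -(x * t) by ring, Real.cos_neg, inv_neg]
          push_cast
          ring
        · exact (integrable_indicator_iff measurableSet_Icc).mp hint2
      rw [hodd0, add_zero]
      have hpt : (fun q : ℝ => h q * ((2 * Real.cos (q * t) - 2 : ℝ) : ℂ))
          = fun q : ℝ => 2 * (h q * ((Real.cos (q * t) : ℝ) : ℂ)) - 2 * h q := by
        funext q
        push_cast
        ring
      rw [hpt, integral_sub ((hintcos t).const_mul 2) (hhint.const_mul 2),
        integral_const_mul, integral_const_mul, hLhdef]
    have hfin : Tendsto
        (fun t : ℝ => 2 * (∫ q : ℝ, h q * ((Real.cos (q * t) : ℝ) : ℂ)) - 2 * Lh)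
        atTop (nhds (2 * 0 - 2 * Lh)) := (hRL.const_mul 2).sub tendsto_const_nhds
    rw [show (2 : ℂ) * 0 - 2 * Lh = -2 * Lh by ring] at hfin
    apply hfin.congr'
    filter_upwards [eventually_ge_atTop (0 : ℝ)] with t ht
    exact (hkey t ht).symm
end

section
/- Let g : ℝ → ℂ be given by g(t) = ∫_{ℝ³} a(p) e^{i ω(p) t} d³p + ∫_{ℝ³} b(p) e^{−i ω(p) t} d³p where ω(p) = √(|p|² + m²), m > 0, and a, b are Schwartz functions on ℝ³. Then g is bounded on ℝ and |g(t)| → 0 as |t| → ∞. -/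
open MeasureTheory Filter Set Metric
open scoped Real ComplexConjugate

noncomputable section RLAux

/-- Integral against `volumeIoiPow n`. -/
lemma integral_volumeIoiPow {G : Type*} [NormedAddCommGroup G] [NormedSpace ℝ G] (n : ℕ)
    (φ : ℝ → G) :
    ∫ x : Ioi (0:ℝ), φ x ∂(Measure.volumeIoiPow n) = ∫ y in Ioi (0:ℝ), y ^ n • φ y := by
  simp only [Measure.volumeIoiPow, ENNReal.ofReal]
  rw [integral_withDensity_eq_integral_smul ((measurable_subtype_coe.pow_const _).real_toNNReal),
    integral_subtype_comap measurableSet_Ioi fun a ↦ Real.toNNReal (a ^ n) • φ a,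
    setIntegral_congr_fun measurableSet_Ioi fun x hx ↦ ?_]
  rw [NNReal.smul_def, Real.coe_toNNReal _ (pow_nonneg hx.out.le _)]

lemma integrable_volumeIoiPow_iff {G : Type*} [NormedAddCommGroup G] [NormedSpace ℝ G] (n : ℕ)
    (φ : ℝ → G) :
    Integrable (fun x : Ioi (0:ℝ) => φ x) (Measure.volumeIoiPow n) ↔
      IntegrableOn (fun y => y ^ n • φ y) (Ioi (0:ℝ)) := by
  rw [Measure.volumeIoiPow]
  have h1 : Integrable (fun x : Ioi (0:ℝ) => φ x)
      ((Measure.comap Subtype.val volume).withDensity fun r : Ioi (0:ℝ) =>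
        ENNReal.ofReal (r.1 ^ n)) ↔
      Integrable (fun x : Ioi (0:ℝ) => Real.toNNReal ((x:ℝ) ^ n) • φ x)
        (Measure.comap Subtype.val volume) := by
    simp only [ENNReal.ofReal]
    exact (integrable_withDensity_iff_integrable_smul
      (μ := Measure.comap Subtype.val volume) (g := fun x : Ioi (0:ℝ) => φ x)
      ((measurable_subtype_coe.pow_const n).real_toNNReal))
  rw [h1]
  have h2 := (MeasurableEmbedding.subtype_coe (measurableSet_Ioi (a := (0:ℝ)))).integrable_map_iff
      (μ := Measure.comap Subtype.val volume) (g := fun y : ℝ => Real.toNNReal (y ^ n) • φ y)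
  rw [map_comap_subtype_coe measurableSet_Ioi] at h2
  rw [show (fun x : Ioi (0:ℝ) => Real.toNNReal ((x:ℝ) ^ n) • φ x)
      = (fun y : ℝ => Real.toNNReal (y ^ n) • φ y) ∘ (Subtype.val) from rfl, ← h2]
  refine integrable_congr ?_
  filter_upwards [ae_restrict_mem measurableSet_Ioi] with x hx
  rw [NNReal.smul_def, Real.coe_toNNReal _ (pow_nonneg hx.out.le _)]

end RLAux

noncomputable section Main

local notation "E3" => EuclideanSpace ℝ (Fin 3)

def sphInt (a : SchwartzMap (EuclideanSpace ℝ (Fin 3)) ℂ) (r : ℝ) : ℂ :=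
  ∫ θ : sphere (0 : E3) 1, a (r • (θ : E3)) ∂((volume : Measure E3).toSphere)

lemma sphInt_continuous (a : SchwartzMap (EuclideanSpace ℝ (Fin 3)) ℂ) :
    Continuous (sphInt a) := by
  obtain ⟨C, -, hC⟩ := a.decay 0 0
  have hC' : ∀ x : E3, ‖a x‖ ≤ C := by
    intro x
    have := hC x
    simpa [norm_iteratedFDeriv_zero] using this
  refine continuous_of_dominated (bound := fun _ => C) (fun r => ?_) (fun r => ?_)
    (integrable_const C) ?_
  · exact (a.continuous.comp ((continuous_const : Continuous fun _ : sphere (0:E3) 1 => r).smul continuous_subtype_val)).aestronglyMeasurable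
  · exact Eventually.of_forall fun θ => hC' _
  · exact Eventually.of_forall fun θ =>
      a.continuous.comp (continuous_id.smul continuous_const)

lemma chain (a : SchwartzMap (EuclideanSpace ℝ (Fin 3)) ℂ) (c : ℝ → ℂ)
    (hc : Continuous c) (hc1 : ∀ r, ‖c r‖ = 1) :
    IntegrableOn (fun y : ℝ => y ^ 2 • (sphInt a y * c y)) (Set.Ioi 0) ∧
      ∫ p : E3, a p * c ‖p‖ = ∫ y in Set.Ioi (0:ℝ), y ^ 2 • (sphInt a y * c y) := by
  have hdim : Module.finrank ℝ E3 = 3 := finrank_euclideanSpace_fin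
  set μ : Measure E3 := volume with hμ
  set n : ℕ := Module.finrank ℝ E3 - 1 with hn
  have hn2 : n = 2 := by rw [hn, hdim]
  have hf : Integrable (fun p : E3 => a p * c ‖p‖) μ := by
    have h := (a.integrable (μ := μ)).bdd_mul
      (hc.comp continuous_norm).aestronglyMeasurable (c := 1) (Eventually.of_forall fun x => le_of_eq (hc1 _))
    exact h.congr (Eventually.of_forall fun x => mul_comm _ _)
  have mp := μ.measurePreserving_homeomorphUnitSphereProd
  set h : sphere (0:E3) 1 × Set.Ioi (0:ℝ) → ℂ :=
    fun y => a (y.2.1 • (y.1 : E3)) * c y.2.1 with hh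
  have hcomp : ∀ x : ({0}ᶜ : Set E3), h (homeomorphUnitSphereProd E3 x) = a x * c ‖(x:E3)‖ := by
    intro x
    have hx : ‖(x : E3)‖ ≠ 0 := norm_ne_zero_iff.2 x.2
    simp only [hh, homeomorphUnitSphereProd_apply_snd_coe,
      homeomorphUnitSphereProd_apply_fst_coe]
    rw [smul_smul, mul_inv_cancel₀ hx, one_smul]
  have hsub : Integrable (fun x : ({0}ᶜ : Set E3) => a x * c ‖(x:E3)‖) (μ.comap Subtype.val) := by
    have h2 := (MeasurableEmbedding.subtype_coe
        (measurableSet_singleton (0:E3)).compl).integrable_map_iff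
      (μ := μ.comap Subtype.val) (g := fun p : E3 => a p * c ‖p‖)
    rw [map_comap_subtype_coe (measurableSet_singleton (0:E3)).compl] at h2
    exact h2.1 hf.integrableOn
  have hprod : Integrable h (μ.toSphere.prod (Measure.volumeIoiPow n)) := by
    rw [← mp.integrable_comp_emb (Homeomorph.measurableEmbedding _)]
    exact hsub.congr (Eventually.of_forall fun x => (hcomp x).symm)
  have hinner : ∀ r : Set.Ioi (0:ℝ),
      (∫ θ : sphere (0:E3) 1, h (θ, r) ∂μ.toSphere) = sphInt a r.1 * c r.1 := by
    intro r
    rw [show (fun θ : sphere (0:E3) 1 => h (θ, r))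
        = fun θ : sphere (0:E3) 1 => a (r.1 • (θ : E3)) * c r.1 from rfl,
      integral_mul_const]
    rfl
  have key : ∫ p : E3, a p * c ‖p‖ ∂μ
      = ∫ r : Set.Ioi (0:ℝ), sphInt a r.1 * c r.1 ∂(Measure.volumeIoiPow n) := by
    calc ∫ p : E3, a p * c ‖p‖ ∂μ
        = ∫ p in ({0}ᶜ : Set E3), a p * c ‖p‖ ∂μ := by
          rw [restrict_compl_singleton]
      _ = ∫ x : ({0}ᶜ : Set E3), a x * c ‖(x:E3)‖ ∂(μ.comap Subtype.val) :=
          (integral_subtype_comap (measurableSet_singleton _).compl _).symm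
      _ = ∫ y, h y ∂(μ.toSphere.prod (Measure.volumeIoiPow n)) := by
          rw [← mp.integral_comp (Homeomorph.measurableEmbedding _) h]
          exact integral_congr_ae (Eventually.of_forall fun x => (hcomp x).symm)
      _ = ∫ r : Set.Ioi (0:ℝ), ∫ θ : sphere (0:E3) 1, h (θ, r) ∂μ.toSphere
            ∂(Measure.volumeIoiPow n) := integral_prod_symm h hprod
      _ = ∫ r : Set.Ioi (0:ℝ), sphInt a r.1 * c r.1 ∂(Measure.volumeIoiPow n) :=
          integral_congr_ae (Eventually.of_forall fun r => hinner r)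
  have hint2 : Integrable (fun r : Set.Ioi (0:ℝ) => sphInt a r.1 * c r.1)
      (Measure.volumeIoiPow n) :=
    hprod.integral_prod_right.congr (Eventually.of_forall fun r => hinner r)
  constructor
  · have := (integrable_volumeIoiPow_iff n (fun y => sphInt a y * c y)).1 hint2
    rwa [hn2] at this
  · rw [key, hn2]
    exact integral_volumeIoiPow 2 fun y => sphInt a y * c y

end Main

section COV

variable {m : ℝ}

lemma sqrt_img (hm : 0 < m) :
    (fun s : ℝ => Real.sqrt (s^2 - m^2)) '' (Set.Ioi m) = Set.Ioi 0 := by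
  ext y
  simp only [Set.mem_image, Set.mem_Ioi]
  constructor
  · rintro ⟨x, hx, rfl⟩
    exact Real.sqrt_pos.2 (by nlinarith)
  · intro hy
    refine ⟨Real.sqrt (y^2 + m^2), ?_, ?_⟩
    · have : m = Real.sqrt (m^2) := (Real.sqrt_sq hm.le).symm
      rw [this]
      exact Real.sqrt_lt_sqrt (sq_nonneg m) (by nlinarith)
    · rw [Real.sq_sqrt (by positivity), add_sub_cancel_right, Real.sqrt_sq hy.le]

lemma sqrt_deriv (hm : 0 < m) : ∀ x ∈ Set.Ioi m,
    HasDerivWithinAt (fun s : ℝ => Real.sqrt (s^2 - m^2))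
      (x / Real.sqrt (x^2 - m^2)) (Set.Ioi m) x := by
  intro x hx
  have hx' : m < x := hx
  have hx2 : 0 < x^2 - m^2 := by nlinarith
  have h1 : HasDerivAt (fun s : ℝ => s^2 - m^2) (2*x) x := by
    simpa using (hasDerivAt_pow 2 x).sub_const (m^2)
  have h2 := (Real.hasDerivAt_sqrt hx2.ne').comp x h1
  have h3 : 1 / (2 * Real.sqrt (x^2 - m^2)) * (2*x) = x / Real.sqrt (x^2 - m^2) := by
    have hs : Real.sqrt (x^2 - m^2) ≠ 0 := (Real.sqrt_pos.2 hx2).ne'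
    field_simp
  rw [h3] at h2
  exact h2.hasDerivWithinAt

lemma sqrt_inj (hm : 0 < m) :
    Set.InjOn (fun s : ℝ => Real.sqrt (s^2 - m^2)) (Set.Ioi m) := by
  have : StrictMonoOn (fun s : ℝ => Real.sqrt (s^2 - m^2)) (Set.Ioi m) := by
    intro x hx y hy hxy
    have hx' : m < x := hx
    have hy' : m < y := hy
    exact Real.sqrt_lt_sqrt (by nlinarith) (by nlinarith)
  exact this.injOn

lemma cov_eq (hm : 0 < m) (G : ℝ → ℂ) :
    ∫ x in Set.Ioi (0:ℝ), G x
      = ∫ s in Set.Ioi m, |s / Real.sqrt (s^2 - m^2)| • G (Real.sqrt (s^2 - m^2)) := by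
  rw [← sqrt_img hm]
  exact integral_image_eq_integral_abs_deriv_smul measurableSet_Ioi (sqrt_deriv hm)
    (sqrt_inj hm) G

lemma cov_int (hm : 0 < m) (G : ℝ → ℂ) :
    IntegrableOn G (Set.Ioi (0:ℝ)) ↔ IntegrableOn
      (fun s => |s / Real.sqrt (s^2 - m^2)| • G (Real.sqrt (s^2 - m^2))) (Set.Ioi m) := by
  rw [← sqrt_img hm]
  exact integrableOn_image_iff_integrableOn_abs_deriv_smul measurableSet_Ioi (sqrt_deriv hm)
    (sqrt_inj hm) G

end COV

section Key

local notation "E3" => EuclideanSpace ℝ (Fin 3)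

lemma key (m : ℝ) (hm : 0 < m) (a : SchwartzMap (EuclideanSpace ℝ (Fin 3)) ℂ) :
    ∃ F : ℝ → ℂ, Integrable F ∧ ∀ t : ℝ,
      (∫ p : E3, a p * Complex.exp (Complex.I * (Real.sqrt (‖p‖ ^ 2 + m ^ 2) : ℝ) * t))
        = ∫ s : ℝ, Complex.exp (Complex.I * s * t) * F s := by
  set R : ℝ → ℝ := fun s => Real.sqrt (s^2 - m^2) with hRdef
  refine ⟨(Set.Ioi m).indicator (fun s => (s * R s) • sphInt a (R s)), ?_, ?_⟩
  · rw [integrable_indicator_iff measurableSet_Ioi]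
    have h1 := (chain a (fun _ => 1) continuous_const (fun _ => norm_one)).1
    have h1' : IntegrableOn (fun y : ℝ => (y^2 : ℝ) • sphInt a y) (Set.Ioi 0) := by
      simpa using h1
    have h2 := (cov_int hm _).1 h1'
    refine h2.congr_fun (fun s hs => ?_) measurableSet_Ioi
    have hs' : m < s := hs
    have hs0 : 0 < s := hm.trans hs'
    have hX : 0 < s^2 - m^2 := by nlinarith
    have hRpos : 0 < R s := Real.sqrt_pos.2 hX
    dsimp only
    rw [abs_of_nonneg (div_nonneg hs0.le (Real.sqrt_nonneg _)), smul_smul]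
    congr 1
    have hsq : R s ^ 2 = s ^ 2 - m ^ 2 := Real.sq_sqrt hX.le
    field_simp
    simp only [hRdef]
  · intro t
    set c : ℝ → ℂ := fun r => Complex.exp (Complex.I * (Real.sqrt (r^2 + m^2) : ℝ) * t)
      with hcdef
    have hc_cont : Continuous c := by
      apply Complex.continuous_exp.comp
      apply Continuous.mul _ continuous_const
      apply continuous_const.mul
      exact Complex.continuous_ofReal.comp
        (Real.continuous_sqrt.comp ((continuous_pow 2).add continuous_const))
    have hc1 : ∀ r : ℝ, ‖c r‖ = 1 := by
      intro r
      simp [hcdef, Complex.norm_exp]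
    have h2 : (∫ p : E3, a p * Complex.exp (Complex.I * (Real.sqrt (‖p‖ ^ 2 + m ^ 2) : ℝ) * t))
        = ∫ y in Set.Ioi (0:ℝ), y ^ 2 • (sphInt a y * c y) := (chain a c hc_cont hc1).2
    rw [h2, cov_eq hm]
    have hind : (fun s : ℝ => Complex.exp (Complex.I * s * t) *
          ((Set.Ioi m).indicator (fun s => (s * R s) • sphInt a (R s)) s))
        = (Set.Ioi m).indicator
            (fun s => Complex.exp (Complex.I * s * t) * ((s * R s) • sphInt a (R s))) := by
      funext s
      by_cases hs : s ∈ Set.Ioi m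
      · simp [Set.indicator_of_mem hs]
      · simp [Set.indicator_of_notMem hs]
    rw [hind, integral_indicator measurableSet_Ioi]
    refine setIntegral_congr_fun measurableSet_Ioi fun s hs => ?_
    have hs' : m < s := hs
    have hs0 : 0 < s := hm.trans hs'
    have hX : 0 < s^2 - m^2 := by nlinarith
    have hRpos : 0 < R s := Real.sqrt_pos.2 hX
    have hroot : Real.sqrt ((R s)^2 + m^2) = s := by
      rw [hRdef]
      rw [Real.sq_sqrt hX.le, sub_add_cancel, Real.sqrt_sq hs0.le]
    have hc_eval : c (R s) = Complex.exp (Complex.I * s * t) := by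
      rw [hcdef]
      simp only [hroot]
    rw [hc_eval, abs_of_nonneg (div_nonneg hs0.le (Real.sqrt_nonneg _)), smul_smul,
      mul_smul_comm]
    have hsc : s / R s * (R s)^2 = s * R s := by
      rw [pow_two]
      field_simp
    rw [hsc, mul_comm (sphInt a (R s))]

end Key

theorem stmt_10 (m : ℝ) (hm : 0 < m)
    (a b : SchwartzMap (EuclideanSpace ℝ (Fin 3)) ℂ) :
    let g : ℝ → ℂ := fun t =>
      (∫ p : EuclideanSpace ℝ (Fin 3),
          a p * Complex.exp (Complex.I * (Real.sqrt (‖p‖ ^ 2 + m ^ 2) : ℝ) * t)) +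
      ∫ p : EuclideanSpace ℝ (Fin 3),
          b p * Complex.exp (-(Complex.I * (Real.sqrt (‖p‖ ^ 2 + m ^ 2) : ℝ) * t))
    (∃ M : ℝ, ∀ t : ℝ, ‖g t‖ ≤ M) ∧ Tendsto g (cocompact ℝ) (nhds 0) := by
  intro g
  obtain ⟨Fa, hFa, hFa_eq⟩ := key m hm a
  obtain ⟨Fb, hFb, hFb_eq⟩ := key m hm b
  have hb_eq : ∀ t : ℝ, (∫ p : EuclideanSpace ℝ (Fin 3),
      b p * Complex.exp (-(Complex.I * (Real.sqrt (‖p‖ ^ 2 + m ^ 2) : ℝ) * t)))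
      = ∫ s : ℝ, Complex.exp (Complex.I * s * (-t)) * Fb s := by
    intro t
    have h := hFb_eq (-t)
    push_cast at h
    rw [← h]
    refine integral_congr_ae (Eventually.of_forall fun p => ?_)
    simp only []
    congr 1
    ring
  have hg : ∀ t : ℝ, g t = (∫ s : ℝ, Complex.exp (Complex.I * s * t) * Fa s)
      + ∫ s : ℝ, Complex.exp (Complex.I * s * (-t)) * Fb s := by
    intro t
    show (∫ p : EuclideanSpace ℝ (Fin 3),
          a p * Complex.exp (Complex.I * (Real.sqrt (‖p‖ ^ 2 + m ^ 2) : ℝ) * t)) +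
      (∫ p : EuclideanSpace ℝ (Fin 3),
          b p * Complex.exp (-(Complex.I * (Real.sqrt (‖p‖ ^ 2 + m ^ 2) : ℝ) * t))) = _
    rw [hFa_eq t, hb_eq t]
  have hbound : ∀ (F : ℝ → ℂ) (u : ℝ), ‖∫ s : ℝ, Complex.exp (Complex.I * s * u) * F s‖
      ≤ ∫ s : ℝ, ‖F s‖ := by
    intro F u
    refine (norm_integral_le_integral_norm _).trans (le_of_eq ?_)
    refine integral_congr_ae (Eventually.of_forall fun s => ?_)
    simp [norm_mul, Complex.norm_exp]
  have hT : ∀ F : ℝ → ℂ, Tendsto (fun u : ℝ => ∫ s : ℝ, Complex.exp (Complex.I * s * u) * F s)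
      (cocompact ℝ) (nhds 0) := by
    intro F
    have h1 := Real.tendsto_integral_exp_smul_cocompact F
    have hc : (-(2 * Real.pi))⁻¹ ≠ 0 := by
      refine inv_ne_zero (neg_ne_zero.2 ?_)
      positivity
    have hhom : Tendsto (fun u : ℝ => u * (-(2 * Real.pi))⁻¹) (cocompact ℝ) (cocompact ℝ) :=
      le_of_eq (Homeomorph.mulRight₀ _ hc).map_cocompact
    refine Tendsto.congr (fun u => ?_) (h1.comp hhom)
    refine integral_congr_ae (Eventually.of_forall fun v => ?_)
    simp only [Function.comp]
    rw [Circle.smul_def, Real.fourierChar_apply]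
    congr 1
    have harg : 2 * Real.pi * (-(v * (u * (-(2 * Real.pi))⁻¹))) = v * u := by
      field_simp
    rw [harg]
    push_cast
    ring
  constructor
  · refine ⟨(∫ s : ℝ, ‖Fa s‖) + ∫ s : ℝ, ‖Fb s‖, fun t => ?_⟩
    rw [hg t]
    have hb' := hbound Fb (-t)
    push_cast at hb'
    exact (norm_add_le _ _).trans (add_le_add (hbound Fa t) hb')
  · have hneg : Tendsto (fun u : ℝ => -u) (cocompact ℝ) (cocompact ℝ) :=
      le_of_eq (Homeomorph.neg ℝ).map_cocompact
    have h2 := (hT Fa).add ((hT Fb).comp hneg)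
    rw [add_zero] at h2
    refine Tendsto.congr (fun t => ?_) h2
    rw [hg t]
    simp only [Function.comp]
    congr 1
    push_cast
    rfl
end
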